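/- arXiv:1804.00939 — 2 statements merged into one kernel-verified Lean document; each statement's English description precedes it below -/
import Mathlib

section
/- Let R be a one-dimensional Gorenstein local ring and I an ideal containing a regular element. Then End_R(I) = End_R(I^{-1}), where both are viewed as subrings of Q(R) and I^{-1} = {α ∈ Q(R) : αI ⊆ R}. -/
open CategoryTheory TensorProduct IsLocalRing

noncomputable section

/-- The minimal number of generators of an `R`-module `M`. -/
def minGen (R M : Type) [CommRing R] [AddCommGroup M] [Module R M] : ℕ :=
  sInf {n | ∃ s : Finset M, s.card = n ∧ Submodule.span R (s : Set M) = ⊤}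

/-- `M` has (generic) rank `r`: at every associated prime of `R`, the localization
of `M` is free of rank `r`. -/
def HasRank (R M : Type) [CommRing R] [AddCommGroup M] [Module R M] (r : ℕ) : Prop :=
  ∀ (p : Ideal R) (hp : p ∈ associatedPrimes R R),
    letI : p.IsPrime := hp.1
    Module.Free (Localization p.primeCompl) (LocalizedModule p.primeCompl M) ∧
      Module.finrank (Localization p.primeCompl) (LocalizedModule p.primeCompl M) = r

/-- The length of a module, as the Krull dimension of its submodule lattice. -/
def mlength (R M : Type) [CommRing R] [AddCommGroup M] [Module R M] : WithBot ℕ∞ :=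
  Order.krullDim (Submodule R M)

/-- The Hilbert–Samuel multiplicity of a one-dimensional local ring `R` is `e`:
the difference `λ(R/m^{n+1}) - λ(R/m^n)` is eventually the constant `e`. -/
def IsMultiplicity (R : Type) [CommRing R] [IsLocalRing R] (e : ℕ) : Prop :=
  ∃ N : ℕ, ∀ n ≥ N,
    mlength R (R ⧸ (maximalIdeal R ^ (n + 1))) =
      mlength R (R ⧸ (maximalIdeal R ^ n)) + ((e : ℕ∞) : WithBot ℕ∞)

/-- `Ext^n_R(M, N)`. -/
abbrev extKGroup (R M N : Type) [CommRing R] [AddCommGroup M] [Module R M]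
    [AddCommGroup N] [Module R N] (n : ℕ) : ModuleCat R :=
  ((Ext R (ModuleCat R) n).obj (Opposite.op (ModuleCat.of R M))).obj (ModuleCat.of R N)

/-- The canonical evaluation map `M ⊗_R M^* → R`. -/
def evalMap (R M : Type) [CommRing R] [AddCommGroup M] [Module R M] :
    M ⊗[R] (M →ₗ[R] R) →ₗ[R] R :=
  TensorProduct.lift LinearMap.applyₗ

/-- The trace ideal of `M`: the image of the evaluation map `M ⊗_R M^* → R`. -/
def traceIdeal (R M : Type) [CommRing R] [AddCommGroup M] [Module R M] : Ideal R :=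
  LinearMap.range (evalMap R M)

/-- A (Noetherian) local ring is Gorenstein of dimension one: it has Krull dimension one
and there is a regular element `x` in the maximal ideal (= the nonunits) such that
`R/(x)` is self-injective. -/
def IsGorensteinLocalOfDimOne (R : Type) [CommRing R] : Prop :=
  IsNoetherianRing R ∧ IsLocalRing R ∧ ringKrullDim R = 1 ∧
    ∃ x ∈ nonunits R, x ∈ nonZeroDivisors R ∧
      Module.Injective (R ⧸ Ideal.span {x}) (R ⧸ Ideal.span {x})

/-- A (Noetherian) local ring of dimension at most one is Gorenstein. -/
def IsGorensteinLocalOfDimLEOne (A : Type) [CommRing A] : Prop :=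
  IsNoetherianRing A ∧ IsLocalRing A ∧
    (Module.Injective A A ∨
      (ringKrullDim A = 1 ∧ ∃ x ∈ nonunits A, x ∈ nonZeroDivisors A ∧
        Module.Injective (A ⧸ Ideal.span {x}) (A ⧸ Ideal.span {x})))

/-- The multiplier set `{α ∈ Q | αA ⊆ A}` of a subset `A` of a ring `Q`. -/
def multEnd {Q : Type} [CommRing Q] (A : Set Q) : Set Q :=
  {α | ∀ a ∈ A, α * a ∈ A}

/-- The image of an ideal `I` in the total quotient ring. -/
def idealImage (R : Type) [CommRing R] (I : Ideal R) : Set (FractionRing R) :=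
  algebraMap R (FractionRing R) '' (I : Set R)

/-- `End_R(I) = {α ∈ Q(R) | α I ⊆ I}` as a submodule of the total quotient ring. -/
def endSubmodule (R : Type) [CommRing R] (I : Ideal R) : Submodule R (FractionRing R) where
  carrier := multEnd (idealImage R I)
  add_mem' := by
    intro a b ha hb x hx
    rw [add_mul]
    obtain ⟨ya, hya, ea⟩ := ha x hx
    obtain ⟨yb, hyb, eb⟩ := hb x hx
    exact ⟨ya + yb, add_mem hya hyb, by rw [map_add, ea, eb]⟩
  zero_mem' := by
    intro x hx
    exact ⟨0, zero_mem _, by rw [map_zero, zero_mul]⟩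
  smul_mem' := by
    intro c a ha x hx
    obtain ⟨y, hy, ey⟩ := ha x hx
    refine ⟨c • y, Submodule.smul_mem _ _ hy, ?_⟩
    rw [Algebra.smul_def, Algebra.smul_def, map_mul, ey, mul_assoc, Algebra.algebraMap_self, RingHom.id_apply]




namespace Stmt9
variable {R : Type} [CommRing R]

lemma mk_smul' (I : Ideal R) (r s : R) :
    r • (Ideal.Quotient.mk I s) = Ideal.Quotient.mk I (r * s) := by
  rw [← Ideal.Quotient.mk_eq_mk, ← Ideal.Quotient.mk_eq_mk, ← Submodule.Quotient.mk_smul]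
  rfl

lemma baer_self {A : Type} [CommRing A] (h : Module.Injective A A) : Module.Baer A A := by
  intro I g
  obtain ⟨h', hh'⟩ := h.out I.subtype Subtype.coe_injective g
  exact ⟨h', fun x hx => hh' ⟨x, hx⟩⟩

lemma ext_mod (x : R) (hInj : Module.Injective (R ⧸ Ideal.span {x}) (R ⧸ Ideal.span {x}))
    (J : Ideal R) (g : J →ₗ[R] R ⧸ Ideal.span {x})
    (hg : ∀ (j : R) (hj : j ∈ J), j ∈ Ideal.span {x} → g ⟨j, hj⟩ = 0) :
    ∃ a : R, ∀ j : J, g j = Ideal.Quotient.mk (Ideal.span {x}) (a * j) := by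
  set A := R ⧸ Ideal.span {x} with hA
  set mkA := Ideal.Quotient.mk (Ideal.span {x}) with hmkA
  have hwd : ∀ (j j' : R) (hj : j ∈ J) (hj' : j' ∈ J), mkA j = mkA j' →
      g ⟨j, hj⟩ = g ⟨j', hj'⟩ := by
    intro j j' hj hj' hjj
    have hsub : j - j' ∈ Ideal.span {x} := by
      rwa [Ideal.Quotient.mk_eq_mk_iff_sub_mem] at hjj
    have hmem : (j - j') ∈ J := J.sub_mem hj hj'
    have h0 : g (⟨j, hj⟩ - ⟨j', hj'⟩) = 0 := by
      have he : (⟨j, hj⟩ - ⟨j', hj'⟩ : J) = ⟨j - j', hmem⟩ := rfl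
      rw [he]; exact hg _ hmem hsub
    rw [map_sub, sub_eq_zero] at h0; exact h0
  set Jb : Ideal A := J.map mkA with hJb
  have hsurj : Function.Surjective mkA := Ideal.Quotient.mk_surjective
  have hmem : ∀ v : Jb, ∃ j, ∃ _ : j ∈ J, mkA j = (v : A) := by
    intro v
    obtain ⟨j, hj, hje⟩ := (Ideal.mem_map_iff_of_surjective mkA hsurj).mp v.2
    exact ⟨j, hj, hje⟩
  choose rep repmem repeq using hmem
  have key : ∀ (v : Jb) (j : R) (hj : j ∈ J), mkA j = (v : A) →
      g ⟨rep v, repmem v⟩ = g ⟨j, hj⟩ := by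
    intro v j hj he
    exact hwd _ _ _ _ (by rw [repeq v, he])
  have hsmul : ∀ (r : R) (b : A), r • b = mkA r * b := by
    intro r b
    obtain ⟨u, rfl⟩ := hsurj b
    rw [mk_smul', ← map_mul]
  set G : Jb →ₗ[A] A := {
    toFun := fun v => g ⟨rep v, repmem v⟩
    map_add' := by
      intro v w
      show g ⟨rep (v + w), repmem _⟩ = g ⟨rep v, repmem v⟩ + g ⟨rep w, repmem w⟩
      have h1 : g ⟨rep (v + w), repmem _⟩ = g ⟨rep v + rep w, J.add_mem (repmem v) (repmem w)⟩ := by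
        apply key
        rw [map_add, repeq, repeq]; rfl
      rw [h1]
      have he : (⟨rep v + rep w, J.add_mem (repmem v) (repmem w)⟩ : J)
          = ⟨rep v, repmem v⟩ + ⟨rep w, repmem w⟩ := rfl
      rw [he, map_add]
    map_smul' := by
      intro a v
      obtain ⟨r, rfl⟩ := hsurj a
      have h1 : g ⟨rep (mkA r • v), repmem _⟩ = g ⟨r * rep v, J.mul_mem_left r (repmem v)⟩ := by
        apply key
        rw [map_mul, repeq]
        have : ((mkA r • v : Jb) : A) = mkA r * (v : A) := rfl
        rw [this]
      simp only [RingHom.id_apply]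
      show g ⟨rep (mkA r • v), repmem _⟩ = mkA r • g ⟨rep v, repmem v⟩
      rw [h1]
      have he : (⟨r * rep v, J.mul_mem_left r (repmem v)⟩ : J) = r • ⟨rep v, repmem v⟩ := rfl
      rw [he, map_smul, hsmul, smul_eq_mul] }
  obtain ⟨g', hg'⟩ := baer_self hInj Jb G
  obtain ⟨a, ha⟩ := hsurj (g' 1)
  refine ⟨a, fun j => ?_⟩
  have hjmem : mkA (j : R) ∈ Jb := Ideal.mem_map_of_mem mkA j.2
  have h1 : g' (mkA (j : R)) = G ⟨mkA (j : R), hjmem⟩ := hg' _ hjmem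
  have h2 : G ⟨mkA (j : R), hjmem⟩ = g j := by
    show g ⟨rep _, repmem _⟩ = g j
    exact key _ _ j.2 rfl
  have h3 : g' (mkA (j : R)) = mkA (j : R) * g' 1 := by
    conv_lhs => rw [show mkA (j : R) = mkA (j : R) • (1 : A) by rw [smul_eq_mul, mul_one]]
    rw [map_smul, smul_eq_mul]
  rw [← h2, ← h1, h3, ← ha, ← map_mul, mul_comm]


section P
variable {R : Type} [CommRing R]

/-- multiplication map between quotients by principal ideals -/
def mulQ (u q q' : R) (h : u * q ∈ Ideal.span {q'}) :
    (R ⧸ Ideal.span {q}) →ₗ[R] R ⧸ Ideal.span {q'} :=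
  Submodule.liftQ _ ((Ideal.span {q'}).mkQ.comp (LinearMap.lsmul R R u)) (by
    intro t ht
    obtain ⟨c, rfl⟩ := Ideal.mem_span_singleton.mp ht
    simp only [LinearMap.mem_ker, LinearMap.comp_apply, LinearMap.lsmul_apply,
      Submodule.mkQ_apply, smul_eq_mul, Submodule.Quotient.mk_eq_zero]
    obtain ⟨d, hd⟩ := Ideal.mem_span_singleton.mp h
    exact Ideal.mem_span_singleton.mpr ⟨d * c, by rw [← mul_assoc, hd, mul_assoc]⟩)

lemma mulQ_mk (u q q' : R) (h : u * q ∈ Ideal.span {q'}) (t : R) :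
    mulQ u q q' h (Ideal.Quotient.mk _ t) = Ideal.Quotient.mk _ (u * t) := by
  rw [← Ideal.Quotient.mk_eq_mk, ← Ideal.Quotient.mk_eq_mk]
  rfl

lemma cancel_pow {x : R} (hx : x ∈ nonZeroDivisors R) (k l : ℕ) (u : R)
    (h : x ^ k * u ∈ Ideal.span {x ^ (k + l)}) : u ∈ Ideal.span {x ^ l} := by
  obtain ⟨v, hv⟩ := Ideal.mem_span_singleton.mp h
  refine Ideal.mem_span_singleton.mpr ⟨v, ?_⟩
  have hreg : x ^ k ∈ nonZeroDivisors R := pow_mem hx k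
  have : x ^ k * u = x ^ k * (x ^ l * v) := by rw [hv, pow_add]; ring
  exact (mul_cancel_left_mem_nonZeroDivisors hreg).mp this

lemma P_lemma {x : R} (hx : x ∈ nonZeroDivisors R)
    (hInj : Module.Injective (R ⧸ Ideal.span {x}) (R ⧸ Ideal.span {x})) :
    ∀ (n : ℕ) (J : Ideal R) (hJ : x ^ (n + 1) ∈ J)
      (f : J →ₗ[R] R ⧸ Ideal.span {x ^ (n + 1)}), f ⟨x ^ (n + 1), hJ⟩ = 0 →
      ∃ c : R, ∀ j : J, f j = Ideal.Quotient.mk _ (c * j) := by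
  intro n
  induction n with
  | zero =>
    intro J hJ f hf
    have hInj1 : Module.Injective (R ⧸ Ideal.span {x ^ (0 + 1)}) (R ⧸ Ideal.span {x ^ (0 + 1)}) := by
      rw [zero_add, pow_one]; exact hInj
    refine ext_mod (x ^ (0 + 1)) hInj1 J f ?_
    intro j hj hjx
    obtain ⟨t, rfl⟩ := Ideal.mem_span_singleton.mp hjx
    have he : (⟨x ^ (0 + 1) * t, hj⟩ : J) = t • ⟨x ^ (0 + 1), hJ⟩ := by
      apply Subtype.ext; simp [mul_comm]
    rw [he, map_smul, hf, smul_zero]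
  | succ n ih =>
    intro J hJ f hf
    -- J' = (J : x)
    set J' : Ideal R := Submodule.colon J (Ideal.span {x}) with hJ'
    have hmemJ' : ∀ c : R, c ∈ J' ↔ c * x ∈ J := fun c => Ideal.mem_colon_span_singleton
    have hxJ' : x ^ (n + 1) ∈ J' := by
      rw [hmemJ']
      have : x ^ (n + 1) * x = x ^ (n + 1 + 1) := by ring
      rw [this]; exact hJ
    -- embedding J' → J by multiplication by x
    set emb : J' →ₗ[R] J := {
      toFun := fun c => ⟨x * (c : R), by
        have := (hmemJ' (c : R)).mp c.2; rwa [mul_comm] ⟩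
      map_add' := by intro a b; apply Subtype.ext; simp [mul_add]
      map_smul' := by intro r a; apply Subtype.ext; simp [mul_comm, mul_assoc, mul_left_comm] } with hemb
    have hσmem : x * x ^ (n + 1) ∈ Ideal.span {x ^ (n + 1 + 1)} := by
      have : x * x ^ (n + 1) = x ^ (n + 1 + 1) := by ring
      rw [this]; exact Ideal.mem_span_singleton_self _
    set σ : (R ⧸ Ideal.span {x ^ (n + 1)}) →ₗ[R] R ⧸ Ideal.span {x ^ (n + 1 + 1)} :=
      mulQ x (x ^ (n + 1)) (x ^ (n + 1 + 1)) hσmem with hσdef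
    have hσinj : Function.Injective σ := by
      intro a b hab
      obtain ⟨a0, rfl⟩ := Ideal.Quotient.mk_surjective a
      obtain ⟨b0, rfl⟩ := Ideal.Quotient.mk_surjective b
      rw [mulQ_mk, mulQ_mk, Ideal.Quotient.mk_eq_mk_iff_sub_mem] at hab
      rw [Ideal.Quotient.mk_eq_mk_iff_sub_mem]
      have : x ^ 1 * (a0 - b0) ∈ Ideal.span {x ^ (1 + (n + 1))} := by
        have h1 : x ^ 1 * (a0 - b0) = x * a0 - x * b0 := by ring
        have h2 : (1 : ℕ) + (n + 1) = n + 1 + 1 := by ring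
        rw [h1, h2]; exact hab
      exact cancel_pow hx 1 (n + 1) _ this
    have hrange : ∀ c : J', f (emb c) ∈ LinearMap.range σ := by
      intro c
      obtain ⟨u, hu⟩ := Ideal.Quotient.mk_surjective (f (emb c))
      have h0 : x ^ (n + 1) • f (emb c) = 0 := by
        rw [← map_smul]
        have he : x ^ (n + 1) • emb c = (c : R) • (⟨x ^ (n + 1 + 1), hJ⟩ : J) := by
          apply Subtype.ext
          show x ^ (n + 1) • (x * (c : R)) = (c : R) • x ^ (n + 1 + 1)
          simp only [smul_eq_mul]; ring
        rw [he, map_smul, hf, smul_zero]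
      rw [← hu, mk_smul'] at h0
      have hmem : x ^ (n + 1) * u ∈ Ideal.span {x ^ (n + 1 + 1)} :=
        Ideal.Quotient.eq_zero_iff_mem.mp h0
      have : u ∈ Ideal.span {x ^ 1} := by
        apply cancel_pow hx (n + 1) 1 u
        rwa [show n + 1 + 1 = n + 1 + 1 from rfl] at hmem
      obtain ⟨v, hv⟩ := Ideal.mem_span_singleton.mp this
      refine ⟨Ideal.Quotient.mk _ v, ?_⟩
      rw [mulQ_mk, ← hu, hv]
      congr 1
      rw [pow_one]
    set E := LinearEquiv.ofInjective σ hσinj with hE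
    set f' : J' →ₗ[R] R ⧸ Ideal.span {x ^ (n + 1)} :=
      E.symm.toLinearMap.comp ((f.comp emb).codRestrict (LinearMap.range σ) hrange) with hf'def
    have hf'spec : ∀ c : J', σ (f' c) = f (emb c) := by
      intro c
      have : E (f' c) = (f.comp emb).codRestrict (LinearMap.range σ) hrange c := by
        simp [hf'def]
      have h2 := congrArg (Subtype.val) this
      rwa [LinearEquiv.ofInjective_apply] at h2
    have hf'0 : f' ⟨x ^ (n + 1), hxJ'⟩ = 0 := by
      apply hσinj
      rw [hf'spec, map_zero]
      have he : emb ⟨x ^ (n + 1), hxJ'⟩ = ⟨x ^ (n + 1 + 1), hJ⟩ := by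
        apply Subtype.ext
        show x * x ^ (n + 1) = x ^ (n + 1 + 1)
        ring
      rw [he, hf]
    obtain ⟨c₀, hc₀⟩ := ih J' hxJ' f' hf'0
    -- h = f - c₀ • (mk ∘ subtype)
    set base : J →ₗ[R] R ⧸ Ideal.span {x ^ (n + 1 + 1)} :=
      (Ideal.span {x ^ (n + 1 + 1)}).mkQ.comp J.subtype with hbase
    have hbase_apply : ∀ j : J, base j = Ideal.Quotient.mk _ (j : R) := by
      intro j; rw [← Ideal.Quotient.mk_eq_mk]; rfl
    set h : J →ₗ[R] R ⧸ Ideal.span {x ^ (n + 1 + 1)} := f - c₀ • base with hh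
    have hmulx : ∀ c : J', h (emb c) = 0 := by
      intro c
      have h1 : f (emb c) = Ideal.Quotient.mk _ (x * (c₀ * (c : R))) := by
        have := hc₀ c
        have h2 := congrArg σ this
        rw [hf'spec] at h2
        rw [h2, mulQ_mk]
      rw [hh]
      simp only [LinearMap.sub_apply, LinearMap.smul_apply]
      rw [h1, hbase_apply, mk_smul']
      have he : (emb c : R) = x * (c : R) := rfl
      rw [he]
      rw [← map_sub, show x * (c₀ * (c : R)) - c₀ * (x * (c : R)) = 0 by ring, map_zero]
    have hkillsx : ∀ (j : R) (hj : j ∈ J), j ∈ Ideal.span {x} → h ⟨j, hj⟩ = 0 := by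
      intro j hj hjx
      obtain ⟨t, rfl⟩ := Ideal.mem_span_singleton.mp hjx
      have ht : t ∈ J' := by rw [hmemJ']; rwa [mul_comm] at hj
      have he : (⟨x * t, hj⟩ : J) = emb ⟨t, ht⟩ := rfl
      rw [he]; exact hmulx _
    have hxh : ∀ j : J, x • h j = 0 := by
      intro j
      rw [← map_smul]
      have hxj : (x • j : J) = ⟨x * (j : R), J.mul_mem_left x j.2⟩ := rfl
      rw [hxj]
      exact hkillsx _ _ (Ideal.mem_span_singleton.mpr ⟨(j : R), rfl⟩)
    -- h lands in range of τ
    have hτmem : x ^ (n + 1) * x ∈ Ideal.span {x ^ (n + 1 + 1)} := by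
      have : x ^ (n + 1) * x = x ^ (n + 1 + 1) := by ring
      rw [this]; exact Ideal.mem_span_singleton_self _
    set τ : (R ⧸ Ideal.span {x}) →ₗ[R] R ⧸ Ideal.span {x ^ (n + 1 + 1)} :=
      mulQ (x ^ (n + 1)) x (x ^ (n + 1 + 1)) hτmem with hτdef
    have hτinj : Function.Injective τ := by
      intro a b hab
      obtain ⟨a0, rfl⟩ := Ideal.Quotient.mk_surjective a
      obtain ⟨b0, rfl⟩ := Ideal.Quotient.mk_surjective b
      rw [mulQ_mk, mulQ_mk, Ideal.Quotient.mk_eq_mk_iff_sub_mem] at hab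
      rw [Ideal.Quotient.mk_eq_mk_iff_sub_mem]
      have h2 : x ^ (n + 1) * (a0 - b0) ∈ Ideal.span {x ^ (n + 1 + 1)} := by
        have h1 : x ^ (n + 1) * (a0 - b0) = x ^ (n + 1) * a0 - x ^ (n + 1) * b0 := by ring
        rw [h1]; exact hab
      have := cancel_pow hx (n + 1) 1 _ h2
      rwa [pow_one] at this
    have hhrange : ∀ j : J, h j ∈ LinearMap.range τ := by
      intro j
      obtain ⟨u, hu⟩ := Ideal.Quotient.mk_surjective (h j)
      have h0 := hxh j
      rw [← hu, mk_smul'] at h0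
      have hmem : x * u ∈ Ideal.span {x ^ (1 + (n + 1))} := by
        have h1 : (1 : ℕ) + (n + 1) = n + 1 + 1 := by ring
        rw [h1]
        have h2 : x * u = x ^ 1 * u := by ring
        exact Ideal.Quotient.eq_zero_iff_mem.mp h0
      have : u ∈ Ideal.span {x ^ (n + 1)} := by
        apply cancel_pow hx 1 (n + 1) u
        have h2 : x ^ 1 * u = x * u := by ring
        rwa [h2]
      obtain ⟨v, hv⟩ := Ideal.mem_span_singleton.mp this
      exact ⟨Ideal.Quotient.mk _ v, by rw [mulQ_mk, ← hu, hv]⟩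
    set Eτ := LinearEquiv.ofInjective τ hτinj with hEτ
    set htilde : J →ₗ[R] R ⧸ Ideal.span {x} :=
      Eτ.symm.toLinearMap.comp (h.codRestrict (LinearMap.range τ) hhrange) with hhtdef
    have hhtspec : ∀ j : J, τ (htilde j) = h j := by
      intro j
      have : Eτ (htilde j) = h.codRestrict (LinearMap.range τ) hhrange j := by simp [hhtdef]
      have h2 := congrArg (Subtype.val) this
      rwa [LinearEquiv.ofInjective_apply] at h2
    have hhtkills : ∀ (j : R) (hj : j ∈ J), j ∈ Ideal.span {x} → htilde ⟨j, hj⟩ = 0 := by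
      intro j hj hjx
      apply hτinj
      rw [hhtspec, map_zero]
      exact hkillsx _ _ hjx
    obtain ⟨a, ha⟩ := ext_mod x hInj J htilde hhtkills
    refine ⟨c₀ + x ^ (n + 1) * a, fun j => ?_⟩
    have h1 : h j = τ (Ideal.Quotient.mk _ (a * (j : R))) := by rw [← ha, hhtspec]
    rw [mulQ_mk] at h1
    have h2 : f j = h j + c₀ • base j := by rw [hh]; simp
    rw [h2, h1, hbase_apply, mk_smul', ← map_add]
    congr 1
    ring

end P

section Core
variable {R : Type} [CommRing R]

lemma socle_exists [IsLocalRing R] (N : Ideal R) (hN : N ≠ ⊤)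
    (hpow : ∃ k, IsLocalRing.maximalIdeal R ^ k ≤ N) :
    ∃ w : R, w ∉ N ∧ ∀ u ∈ IsLocalRing.maximalIdeal R, w * u ∈ N := by
  classical
  have ht : IsLocalRing.maximalIdeal R ^ (Nat.find hpow) ≤ N := Nat.find_spec hpow
  have ht1 : Nat.find hpow ≠ 0 := by
    intro h0
    rw [h0, pow_zero] at ht
    rw [Ideal.one_eq_top] at ht
    exact hN (top_le_iff.mp ht)
  obtain ⟨t', he⟩ : ∃ t', Nat.find hpow = t' + 1 :=
    ⟨Nat.find hpow - 1, (Nat.succ_pred_eq_of_pos (Nat.pos_of_ne_zero ht1)).symm⟩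
  have hmin : ¬ IsLocalRing.maximalIdeal R ^ t' ≤ N :=
    Nat.find_min hpow (by omega)
  obtain ⟨w, hw1, hw2⟩ := SetLike.not_le_iff_exists.mp hmin
  refine ⟨w, hw2, fun u hu => ?_⟩
  have : w * u ∈ IsLocalRing.maximalIdeal R ^ (t' + 1) := by
    rw [pow_succ]; exact Ideal.mul_mem_mul hw1 hu
  exact (he ▸ ht) this

lemma injective_Bn {x : R} (hx : x ∈ nonZeroDivisors R)
    (hInj : Module.Injective (R ⧸ Ideal.span {x}) (R ⧸ Ideal.span {x})) (n : ℕ) :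
    Module.Injective (R ⧸ Ideal.span {x ^ (n + 1)}) (R ⧸ Ideal.span {x ^ (n + 1)}) := by
  apply Module.Baer.injective
  intro Ib g
  have hsurj : Function.Surjective (Ideal.Quotient.mk (Ideal.span {x ^ (n + 1)})) :=
    Ideal.Quotient.mk_surjective
  have hqJ : x ^ (n + 1) ∈ Ib.comap (Ideal.Quotient.mk (Ideal.span {x ^ (n + 1)})) := by
    rw [Ideal.mem_comap,
      show Ideal.Quotient.mk (Ideal.span {x ^ (n + 1)}) (x ^ (n + 1)) = 0 from
        Ideal.Quotient.eq_zero_iff_mem.mpr (Ideal.mem_span_singleton_self _)]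
    exact Ib.zero_mem
  have hsmul : ∀ (r : R) (b : R ⧸ Ideal.span {x ^ (n + 1)}),
      r • b = Ideal.Quotient.mk (Ideal.span {x ^ (n + 1)}) r * b := by
    intro r b
    obtain ⟨u, rfl⟩ := hsurj b
    rw [mk_smul', ← map_mul]
  set f : (Ib.comap (Ideal.Quotient.mk (Ideal.span {x ^ (n + 1)}))) →ₗ[R]
      R ⧸ Ideal.span {x ^ (n + 1)} := {
    toFun := fun j => g ⟨Ideal.Quotient.mk (Ideal.span {x ^ (n + 1)}) (j : R),
      Ideal.mem_comap.mp j.2⟩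
    map_add' := by
      intro a b
      show g ⟨Ideal.Quotient.mk _ ((a : R) + (b : R)), _⟩ = _
      have he : (⟨Ideal.Quotient.mk (Ideal.span {x ^ (n + 1)}) ((a : R) + (b : R)), by
            rw [map_add]; exact Ib.add_mem (Ideal.mem_comap.mp a.2) (Ideal.mem_comap.mp b.2)⟩ :
            Ib) = ⟨Ideal.Quotient.mk _ (a : R), Ideal.mem_comap.mp a.2⟩
              + ⟨Ideal.Quotient.mk _ (b : R), Ideal.mem_comap.mp b.2⟩ := by
        apply Subtype.ext; exact map_add _ _ _
      rw [he, map_add]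
    map_smul' := by
      intro r a
      simp only [RingHom.id_apply]
      show g ⟨Ideal.Quotient.mk _ (r * (a : R)), _⟩ = r • g ⟨Ideal.Quotient.mk _ (a : R), _⟩
      have he : (⟨Ideal.Quotient.mk (Ideal.span {x ^ (n + 1)}) (r * (a : R)), by
            rw [map_mul]; exact Ib.mul_mem_left _ (Ideal.mem_comap.mp a.2)⟩ : Ib)
          = Ideal.Quotient.mk (Ideal.span {x ^ (n + 1)}) r •
            ⟨Ideal.Quotient.mk _ (a : R), Ideal.mem_comap.mp a.2⟩ := by
        apply Subtype.ext
        show Ideal.Quotient.mk (Ideal.span {x ^ (n + 1)}) (r * (a : R))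
          = Ideal.Quotient.mk (Ideal.span {x ^ (n + 1)}) r • Ideal.Quotient.mk _ (a : R)
        rw [smul_eq_mul, map_mul]
      rw [he, map_smul, smul_eq_mul, ← hsmul] } with hfdef
  have hf0 : f ⟨x ^ (n + 1), hqJ⟩ = 0 := by
    show g ⟨Ideal.Quotient.mk _ (x ^ (n + 1)), _⟩ = 0
    have he : (⟨Ideal.Quotient.mk (Ideal.span {x ^ (n + 1)}) (x ^ (n + 1)),
        Ideal.mem_comap.mp hqJ⟩ : Ib) = 0 := by
      apply Subtype.ext
      exact Ideal.Quotient.eq_zero_iff_mem.mpr (Ideal.mem_span_singleton_self _)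
    rw [he, map_zero]
  obtain ⟨c, hc⟩ := P_lemma hx hInj n _ hqJ f hf0
  refine ⟨LinearMap.toSpanSingleton _ _ (Ideal.Quotient.mk (Ideal.span {x ^ (n + 1)}) c),
    fun v hv => ?_⟩
  obtain ⟨j, rfl⟩ := hsurj v
  have hjJ : j ∈ Ib.comap (Ideal.Quotient.mk (Ideal.span {x ^ (n + 1)})) := hv
  have h2 : g ⟨Ideal.Quotient.mk _ j, hv⟩ = Ideal.Quotient.mk _ (c * j) := hc ⟨j, hjJ⟩
  rw [LinearMap.toSpanSingleton_apply, smul_eq_mul, ← map_mul, mul_comm j c, ← h2]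

lemma core [IsLocalRing R] [IsNoetherianRing R] {x : R} (hx : x ∈ nonZeroDivisors R)
    (hxm : x ∈ IsLocalRing.maximalIdeal R)
    (hInj : Module.Injective (R ⧸ Ideal.span {x}) (R ⧸ Ideal.span {x}))
    (hpow : ∃ k, IsLocalRing.maximalIdeal R ^ k ≤ Ideal.span {x}) (n : ℕ)
    (I : Ideal R) (hxI : x ^ (n + 1) ∈ I) (r : R)
    (hr : ∀ a : R, (∀ i ∈ I, a * i ∈ Ideal.span {x ^ (n + 1)}) → r * a ∈ Ideal.span {x ^ (n + 1)}) :
    r ∈ I := by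
  by_contra hrI
  have hinj := injective_Bn hx hInj n
  set q := x ^ (n + 1) with hq
  set mkq := Ideal.Quotient.mk (Ideal.span {q}) with hmkq
  have hsurj : Function.Surjective mkq := Ideal.Quotient.mk_surjective
  have hqI : Ideal.span {q} ≤ I := (Ideal.span_singleton_le_iff_mem _).mpr hxI
  have hNtop : Ideal.span {q} ≠ ⊤ := by
    intro h
    have hqu : IsUnit q := by
      rw [← Ideal.span_singleton_eq_top]; exact h
    have hxu : IsUnit x := isUnit_of_dvd_unit (dvd_pow_self x (Nat.succ_ne_zero n)) hqu
    exact Ideal.IsMaximal.ne_top (IsLocalRing.maximalIdeal.isMaximal R)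
      ((IsLocalRing.maximalIdeal R).eq_top_of_isUnit_mem hxm hxu)
  have hpow' : ∃ k, IsLocalRing.maximalIdeal R ^ k ≤ Ideal.span {q} := by
    obtain ⟨k, hk⟩ := hpow
    refine ⟨k * (n + 1), ?_⟩
    have h1 : IsLocalRing.maximalIdeal R ^ (k * (n + 1)) = (IsLocalRing.maximalIdeal R ^ k) ^ (n + 1) := by
      rw [← pow_mul]
    rw [h1, hq, ← Ideal.span_singleton_pow]
    exact Ideal.pow_right_mono hk (n + 1)
  obtain ⟨w, hw1, hw2⟩ := socle_exists _ hNtop hpow'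
  set K : Ideal R := Submodule.colon I (Ideal.span {r}) with hKdef
  have hKmem : ∀ a, a ∈ K ↔ a * r ∈ I := fun a => Ideal.mem_colon_span_singleton
  have hKtop : K ≠ ⊤ := by
    intro h
    apply hrI
    have h1 : (1 : R) ∈ K := h ▸ Submodule.mem_top
    have := (hKmem 1).mp h1
    rwa [one_mul] at this
  have hKm : K ≤ IsLocalRing.maximalIdeal R := IsLocalRing.le_maximalIdeal hKtop
  set B := R ⧸ Ideal.span {q} with hB
  set Ib : Ideal B := I.map mkq with hIb
  set Kb : Ideal B := K.map mkq with hKb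
  set mulr : B →ₗ[B] B := LinearMap.toSpanSingleton B B (mkq r) with hmulr
  set φ : B →ₗ[B] B ⧸ Ib := Ib.mkQ.comp mulr with hφ
  have hKφ : Kb ≤ LinearMap.ker φ := by
    intro v hv
    obtain ⟨k, hk, rfl⟩ := (Ideal.mem_map_iff_of_surjective mkq hsurj).mp hv
    show Ib.mkQ (mulr (mkq k)) = 0
    rw [hmulr, LinearMap.toSpanSingleton_apply, smul_eq_mul, ← map_mul]
    rw [Submodule.mkQ_apply, Submodule.Quotient.mk_eq_zero]
    exact Ideal.mem_map_of_mem mkq ((hKmem k).mp hk)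
  set ι : (B ⧸ Kb) →ₗ[B] B ⧸ Ib := Submodule.liftQ Kb φ hKφ with hι
  have hιinj : Function.Injective ι := by
    rw [← LinearMap.ker_eq_bot]
    apply Submodule.ker_liftQ_eq_bot
    intro v hv
    obtain ⟨b, rfl⟩ := hsurj v
    have h1 : Ib.mkQ (mulr (mkq b)) = 0 := hv
    rw [hmulr, LinearMap.toSpanSingleton_apply, smul_eq_mul, ← map_mul,
      Submodule.mkQ_apply, Submodule.Quotient.mk_eq_zero] at h1
    obtain ⟨i, hi, hie⟩ := (Ideal.mem_map_iff_of_surjective mkq hsurj).mp h1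
    have hsub : i - b * r ∈ Ideal.span {q} := by
      rwa [← Ideal.Quotient.mk_eq_mk_iff_sub_mem]
    have hbr : b * r ∈ I := by
      have h2 : b * r = i - (i - b * r) := by ring
      rw [h2]
      exact I.sub_mem hi (hqI hsub)
    exact Ideal.mem_map_of_mem mkq ((hKmem b).mpr hbr)
  set ψ : B →ₗ[B] B := LinearMap.toSpanSingleton B B (mkq w) with hψ
  have hKψ : Kb ≤ LinearMap.ker ψ := by
    intro v hv
    obtain ⟨k, hk, rfl⟩ := (Ideal.mem_map_iff_of_surjective mkq hsurj).mp hv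
    show mkq k • mkq w = 0
    rw [smul_eq_mul, ← map_mul]
    rw [Ideal.Quotient.eq_zero_iff_mem]
    have := hw2 k (hKm hk)
    rwa [mul_comm] at this
  set gX : (B ⧸ Kb) →ₗ[B] B := Submodule.liftQ Kb ψ hKψ with hgX
  obtain ⟨h, hcomp⟩ := hinj.out ι hιinj gX
  obtain ⟨c, hc⟩ := hsurj (h (Ib.mkQ 1))
  have hcI : ∀ i ∈ I, c * i ∈ Ideal.span {q} := by
    intro i hi
    have h0 : Ib.mkQ (mkq i) = 0 := by
      rw [Submodule.mkQ_apply, Submodule.Quotient.mk_eq_zero]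
      exact Ideal.mem_map_of_mem mkq hi
    have h2 : Ib.mkQ (mkq i) = mkq i • Ib.mkQ 1 := by
      rw [← map_smul]; congr 1; rw [smul_eq_mul, mul_one]
    have h3 : mkq i • h (Ib.mkQ 1) = 0 := by
      rw [← map_smul, ← h2, h0, map_zero]
    rw [← hc, smul_eq_mul, ← map_mul, Ideal.Quotient.eq_zero_iff_mem] at h3
    rwa [mul_comm] at h3
  have hrc : r * c ∈ Ideal.span {q} := hr c hcI
  have h4 : gX (Kb.mkQ 1) = mkq w := by
    rw [hgX, Submodule.mkQ_apply, Submodule.liftQ_apply, hψ, LinearMap.toSpanSingleton_apply,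
      one_smul]
  have h5 : ι (Kb.mkQ 1) = Ib.mkQ (mkq r) := by
    rw [hι, Submodule.mkQ_apply, Submodule.liftQ_apply, hφ]
    show Ib.mkQ (mulr 1) = Ib.mkQ (mkq r)
    rw [hmulr, LinearMap.toSpanSingleton_apply, one_smul]
  have h6 : h (Ib.mkQ (mkq r)) = mkq w := by
    rw [← h5, hcomp, h4]
  have h7 : Ib.mkQ (mkq r) = mkq r • Ib.mkQ 1 := by
    rw [← map_smul]; congr 1; rw [smul_eq_mul, mul_one]
  rw [h7, map_smul, ← hc, smul_eq_mul, ← map_mul] at h6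
  have h8 : mkq (r * c) = 0 := Ideal.Quotient.eq_zero_iff_mem.mpr hrc
  rw [h8] at h6
  exact hw1 (Ideal.Quotient.eq_zero_iff_mem.mp h6.symm)

end Core

section Dim
variable {R : Type} [CommRing R]

lemma pow_le_span_of_regular [IsNoetherianRing R] [IsLocalRing R]
    (hdim : ringKrullDim R = 1) {z : R} (hz : z ∈ nonZeroDivisors R)
    (hzm : z ∈ IsLocalRing.maximalIdeal R) :
    ∃ k, IsLocalRing.maximalIdeal R ^ k ≤ Ideal.span {z} := by
  have hprime : ∀ p : Ideal R, p.IsPrime → z ∈ p → p = IsLocalRing.maximalIdeal R := by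
    intro p hp hzp
    by_contra hne
    have hple : p ≤ IsLocalRing.maximalIdeal R := IsLocalRing.le_maximalIdeal hp.ne_top
    have hplt : p < IsLocalRing.maximalIdeal R := lt_of_le_of_ne hple hne
    obtain ⟨q, hqmin, hqle⟩ := Ideal.exists_minimalPrimes_le (bot_le : ⊥ ≤ p)
    haveI hqprime : q.IsPrime := hqmin.1.1
    have hzq : z ∉ q := by
      intro hzq
      exact notMem_nonZeroDivisors_of_mem_mem_minimalPrimes hzq hqmin hz
    have hqp : q < p := lt_of_le_of_ne hqle (fun h => hzq (h ▸ hzp))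
    let P0 : PrimeSpectrum R := ⟨q, hqprime⟩
    let P1 : PrimeSpectrum R := ⟨p, hp⟩
    let P2 : PrimeSpectrum R := ⟨IsLocalRing.maximalIdeal R,
      (IsLocalRing.maximalIdeal.isMaximal R).isPrime⟩
    have h01 : P0 < P1 := hqp
    have h12 : P1 < P2 := hplt
    let ch : LTSeries (PrimeSpectrum R) :=
      (((RelSeries.singleton _ P2).cons P1 (by exact h12)).cons P0 (by exact h01))
    have hlen := Order.LTSeries.length_le_krullDim ch
    have hlen2 : ch.length = 2 := rfl
    rw [hlen2] at hlen
    have hle : ((2 : ℕ) : WithBot ℕ∞) ≤ ringKrullDim R := hlen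
    rw [hdim] at hle
    norm_num at hle
  have hrad : (Ideal.span {z}).radical = IsLocalRing.maximalIdeal R := by
    rw [Ideal.radical_eq_sInf]
    apply le_antisymm
    · exact sInf_le ⟨(Ideal.span_singleton_le_iff_mem _).mpr hzm,
        (IsLocalRing.maximalIdeal.isMaximal R).isPrime⟩
    · apply le_sInf
      rintro p ⟨hle, hp⟩
      rw [hprime p hp (hle (Ideal.mem_span_singleton_self z))]
  obtain ⟨k, hk⟩ := Ideal.exists_radical_pow_le_of_fg (Ideal.span {z}) (IsNoetherian.noetherian _)
  exact ⟨k, by rwa [hrad] at hk⟩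

end Dim
end Stmt9

theorem stmt_9 (R : Type) [CommRing R] (hGor : IsGorensteinLocalOfDimOne R)
    (I : Ideal R) (hreg : ∃ x ∈ I, x ∈ nonZeroDivisors R) :
    multEnd (idealImage R I) =
      multEnd {α : FractionRing R | ∀ x ∈ I,
        α * algebraMap R (FractionRing R) x ∈ Set.range (algebraMap R (FractionRing R))} := by
  obtain ⟨hNoeth, hLoc, hdim, x, hxnu, hxreg, hInjx⟩ := hGor
  haveI := hNoeth; haveI := hLoc
  obtain ⟨y, hyI, hyreg⟩ := hreg
  have hinj : Function.Injective (algebraMap R (FractionRing R)) :=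
    IsFractionRing.injective R (FractionRing R)
  have hxm : x ∈ IsLocalRing.maximalIdeal R := hxnu
  have hpowx : ∃ k, IsLocalRing.maximalIdeal R ^ k ≤ Ideal.span {x} :=
    Stmt9.pow_le_span_of_regular hdim hxreg hxm
  have hxnI : ∃ n : ℕ, x ^ (n + 1) ∈ I := by
    by_cases hyu : IsUnit y
    · refine ⟨0, ?_⟩
      rw [Ideal.eq_top_of_isUnit_mem I hyI hyu]
      trivial
    · have hym : y ∈ IsLocalRing.maximalIdeal R := hyu
      obtain ⟨k, hk⟩ := Stmt9.pow_le_span_of_regular hdim hyreg hym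
      refine ⟨k, ?_⟩
      have h1 : x ^ (k + 1) ∈ IsLocalRing.maximalIdeal R ^ (k + 1) :=
        Ideal.pow_mem_pow hxm (k + 1)
      have h2 : IsLocalRing.maximalIdeal R ^ (k + 1) ≤ Ideal.span {y} :=
        le_trans (Ideal.pow_le_pow_right (Nat.le_succ k)) hk
      exact (Ideal.span_singleton_le_iff_mem _).mpr hyI (h2 h1)
  obtain ⟨n, hxnI⟩ := hxnI
  ext α
  simp only [multEnd, Set.mem_setOf_eq]
  constructor
  · intro hα β hβ
    intro i hi
    obtain ⟨j, hj, hje⟩ := hα (algebraMap R (FractionRing R) i) ⟨i, hi, rfl⟩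
    have he : α * β * algebraMap R (FractionRing R) i
        = β * (α * algebraMap R (FractionRing R) i) := by ring
    rw [he, ← hje]
    exact hβ j hj
  · intro hα
    rintro qq ⟨i, hi, rfl⟩
    have h1 : ∀ x' ∈ I, (1 : FractionRing R) * algebraMap R (FractionRing R) x'
        ∈ Set.range (algebraMap R (FractionRing R)) := by
      intro x' hx'; rw [one_mul]; exact ⟨x', rfl⟩
    have hαS := hα 1 h1
    have hαS' : ∀ x' ∈ I, α * algebraMap R (FractionRing R) x'
        ∈ Set.range (algebraMap R (FractionRing R)) := by
      intro x' hx'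
      have := hαS x' hx'
      rwa [mul_one] at this
    obtain ⟨r, hre⟩ := hαS' i hi
    refine ⟨r, ?_, hre⟩
    apply Stmt9.core hxreg hxm hInjx hpowx n I hxnI r
    intro a ha
    have hqreg : x ^ (n + 1) ∈ nonZeroDivisors R := pow_mem hxreg (n + 1)
    set β := IsLocalization.mk' (FractionRing R) a
      (⟨x ^ (n + 1), hqreg⟩ : nonZeroDivisors R) with hβdef
    have hspec : β * algebraMap R (FractionRing R) (x ^ (n + 1)) = algebraMap R (FractionRing R) a :=
      IsLocalization.mk'_spec (FractionRing R) a ⟨x ^ (n + 1), hqreg⟩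
    have hu : IsUnit (algebraMap R (FractionRing R) (x ^ (n + 1))) :=
      IsLocalization.map_units (FractionRing R) (⟨x ^ (n + 1), hqreg⟩ : nonZeroDivisors R)
    have hβS : ∀ x' ∈ I, β * algebraMap R (FractionRing R) x'
        ∈ Set.range (algebraMap R (FractionRing R)) := by
      intro x' hx'
      obtain ⟨t, ht⟩ := Ideal.mem_span_singleton.mp (ha x' hx')
      refine ⟨t, ?_⟩
      apply hu.mul_left_cancel
      have hc1 : algebraMap R (FractionRing R) (x ^ (n + 1)) * algebraMap R (FractionRing R) t
          = algebraMap R (FractionRing R) (a * x') := by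
        rw [← map_mul, ← ht]
      have hc2 : algebraMap R (FractionRing R) (x ^ (n + 1)) * (β * algebraMap R (FractionRing R) x')
          = algebraMap R (FractionRing R) (a * x') := by
        rw [show algebraMap R (FractionRing R) (x ^ (n + 1)) * (β * algebraMap R (FractionRing R) x')
          = (β * algebraMap R (FractionRing R) (x ^ (n + 1))) * algebraMap R (FractionRing R) x'
          from by ring, hspec, ← map_mul]
      rw [hc1, hc2]
    have hαβ := hα β hβS
    obtain ⟨u, hue⟩ := hαβ i hi
    have hkey : algebraMap R (FractionRing R) (r * a)
        = algebraMap R (FractionRing R) (u * x ^ (n + 1)) := by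
      rw [map_mul, map_mul, hre]
      calc α * algebraMap R (FractionRing R) i * algebraMap R (FractionRing R) a
          = (α * β * algebraMap R (FractionRing R) i) *
              algebraMap R (FractionRing R) (x ^ (n + 1)) := by
            rw [show α * β * algebraMap R (FractionRing R) i *
                algebraMap R (FractionRing R) (x ^ (n + 1))
              = α * algebraMap R (FractionRing R) i *
                (β * algebraMap R (FractionRing R) (x ^ (n + 1))) from by ring, hspec]
        _ = algebraMap R (FractionRing R) u * algebraMap R (FractionRing R) (x ^ (n + 1)) := by
            rw [hue]
    have := hinj hkey
    exact Ideal.mem_span_singleton.mpr ⟨u, by rw [this]; ring⟩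
end
end

section
/- Let R be a one-dimensional Gorenstein local ring and I an ideal containing a regular element such that End_R(I) = R (as subrings of Q(R)). Then I is principal. -/
open CategoryTheory TensorProduct IsLocalRing

noncomputable section

section Aux
variable {R : Type} [CommRing R]

lemma reg_cancel {t a b : R} (ht : t ∈ nonZeroDivisors R) (h : t * a = t * b) : a = b :=
  (mul_cancel_left_mem_nonZeroDivisors ht).mp h

/-- socle element -/
lemma exists_socle [IsLocalRing R] {y : R} (hyu : y ∈ nonunits R)
    (hm : ∃ k, (maximalIdeal R) ^ k ≤ Ideal.span {y}) :
    ∃ s : R, s ∉ Ideal.span {y} ∧ ∀ a ∈ maximalIdeal R, s * a ∈ Ideal.span {y} := by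
  classical
  obtain ⟨k, hk⟩ := hm
  have hpred : ∃ k, (maximalIdeal R) ^ k ≤ Ideal.span {y} := ⟨k, hk⟩
  set k0 := Nat.find hpred with hk0
  have hk0le : (maximalIdeal R) ^ k0 ≤ Ideal.span {y} := Nat.find_spec hpred
  have hk0pos : k0 ≠ 0 := by
    intro h0
    have : (1 : R) ∈ Ideal.span {y} := by
      have := hk0le
      rw [h0, pow_zero, Ideal.one_eq_top] at this
      exact this Submodule.mem_top
    rw [Ideal.mem_span_singleton] at this
    exact hyu (isUnit_of_dvd_one this)
  have hlt : ¬ ((maximalIdeal R) ^ (k0 - 1) ≤ Ideal.span {y}) :=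
    Nat.find_min hpred (by omega)
  obtain ⟨s, hs1, hs2⟩ := SetLike.not_le_iff_exists.mp hlt
  refine ⟨s, hs2, fun a ha => hk0le ?_⟩
  have : s * a ∈ (maximalIdeal R) ^ (k0 - 1 + 1) := by
    rw [pow_succ]; exact Ideal.mul_mem_mul hs1 ha
  rwa [Nat.sub_add_cancel (by omega : 1 ≤ k0)] at this

end Aux


lemma not_mem_minimalPrimes_of_regular {R : Type} [CommRing R] {x : R}
    (hx : x ∈ nonZeroDivisors R) {q : Ideal R} (hq : q ∈ minimalPrimes R) : x ∉ q := by
  intro hxq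
  haveI hqp : q.IsPrime := hq.1.1
  set S := Localization q.primeCompl
  have hmem : algebraMap R S x ∈ IsLocalRing.maximalIdeal S := by
    exact (IsLocalization.AtPrime.to_map_mem_maximal_iff S q x).mpr hxq
  have hnil : IsNilpotent (algebraMap R S x) := by
    open Localization.AtPrime in
    exact (haveI : Ring.KrullDimLE 0 S := .of_isLocalization _ hq _; Ring.KrullDimLE.isNilpotent_iff_mem_maximalIdeal).mpr hmem
  obtain ⟨n, hn⟩ := hnil
  rw [← map_pow] at hn
  obtain ⟨m, hm⟩ := (IsLocalization.map_eq_zero_iff q.primeCompl S _).mp hn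
  have hm0 : (m : R) = 0 := mem_nonZeroDivisors_iff_right.mp (pow_mem hx n) _ hm
  have := m.2
  rw [hm0] at this
  exact this q.zero_mem

lemma pow_maximal_le {R : Type} [CommRing R] [IsNoetherianRing R] [IsLocalRing R]
    (hdim : ringKrullDim R = 1) {x : R} (hx : x ∈ nonZeroDivisors R) (hxu : x ∈ nonunits R) :
    ∃ k, (maximalIdeal R) ^ k ≤ Ideal.span {x} := by
  have hrad : maximalIdeal R ≤ (Ideal.span {x}).radical := by
    rw [Ideal.radical_eq_sInf]
    refine le_sInf ?_
    rintro p ⟨hxp, hp⟩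
    by_contra hmp
    haveI := hp
    obtain ⟨q, hqmin, hqp⟩ := Ideal.exists_minimalPrimes_le (I := ⊥) (J := p) bot_le
    haveI hqprime : q.IsPrime := hqmin.1.1
    have hxq : x ∉ q := not_mem_minimalPrimes_of_regular hx hqmin
    have hxmem : x ∈ p := hxp (Ideal.subset_span rfl)
    have h1 : q < p := lt_of_le_of_ne hqp (fun h => hxq (h ▸ hxmem))
    have h2 : p < maximalIdeal R :=
      lt_of_le_of_ne (IsLocalRing.le_maximalIdeal hp.ne_top) (fun h => hmp (le_of_eq h.symm))
    let c : LTSeries (PrimeSpectrum R) :=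
      ⟨2, ![⟨q, hqprime⟩, ⟨p, hp⟩, ⟨maximalIdeal R, inferInstance⟩], by
        intro i
        fin_cases i
        · exact h1
        · exact h2⟩
    have hle := Order.LTSeries.length_le_krullDim c
    have h2le : (2 : ℕ) ≤ (1 : WithBot ℕ∞) := by
      rw [← hdim]; exact hle
    norm_num at h2le
  obtain ⟨n, hn⟩ := Ideal.exists_radical_pow_le_of_fg (Ideal.span {x}) (IsNoetherian.noetherian _)
  exact ⟨n, le_trans (Ideal.pow_right_mono hrad n) hn⟩


lemma reg_cancel' {R : Type} [CommRing R] {t a b : R} (ht : t ∈ nonZeroDivisors R)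
    (h : t * a = t * b) : a = b :=
  (mul_cancel_left_mem_nonZeroDivisors ht).mp h

section Glue
variable {R : Type} [CommRing R]

lemma exists_glue (J : Ideal R) (b y s : R)
    (hb : ∀ r : R, r * b ∈ J → r * s ∈ Ideal.span {y}) :
    ∃ φ : ↥(J ⊔ Ideal.span {b} : Ideal R) →ₗ[R] R ⧸ Ideal.span {y},
      (∀ (a : R) (ha : a ∈ (J ⊔ Ideal.span {b} : Ideal R)), a ∈ J → φ ⟨a, ha⟩ = 0) ∧
        φ ⟨b, Ideal.mem_sup_right (Ideal.mem_span_singleton_self b)⟩ =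
          Ideal.Quotient.mk _ s := by
  classical
  set J' : Ideal R := J ⊔ Ideal.span {b} with hJ'
  have hdec : ∀ a : J', ∃ jr : R × R, jr.1 ∈ J ∧ (a : R) = jr.1 + jr.2 * b := by
    rintro ⟨a, ha⟩
    rw [hJ', Submodule.mem_sup] at ha
    obtain ⟨j, hj, z, hz, rfl⟩ := ha
    obtain ⟨r, rfl⟩ := Ideal.mem_span_singleton'.mp hz
    exact ⟨(j, r), hj, rfl⟩
  choose p hp1 hp2 using hdec
  have wd : ∀ (j r j' r' : R), j ∈ J → j' ∈ J → j + r * b = j' + r' * b →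
      Ideal.Quotient.mk (Ideal.span {y}) (r * s) = Ideal.Quotient.mk _ (r' * s) := by
    intro j r j' r' hj hj' he
    rw [Ideal.Quotient.mk_eq_mk_iff_sub_mem, ← sub_mul]
    refine hb _ ?_
    have : (r - r') * b = j' - j := by ring_nf; linear_combination he
    rw [this]
    exact sub_mem hj' hj
  have key : ∀ (a : J') (j r : R), j ∈ J → (a : R) = j + r * b →
      Ideal.Quotient.mk (Ideal.span {y}) ((p a).2 * s) = Ideal.Quotient.mk _ (r * s) := by
    intro a j r hj he
    exact wd _ _ _ _ (hp1 a) hj ((hp2 a).symm.trans he)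
  refine ⟨⟨⟨fun a => Ideal.Quotient.mk _ ((p a).2 * s), ?_⟩, ?_⟩, ?_, ?_⟩
  · intro a a'
    exact key (a + a') ((p a).1 + (p a').1) ((p a).2 + (p a').2)
      (add_mem (hp1 a) (hp1 a'))
      (by push_cast [hp2 a, hp2 a']; ring) |>.trans
      (by rw [add_mul, map_add])
  · intro r a
    refine (key (r • a) (r * (p a).1) (r * (p a).2) (Ideal.mul_mem_left _ _ (hp1 a))
      (by rw [Submodule.coe_smul, smul_eq_mul, hp2 a]; ring)).trans ?_
    have : (r * (p a).2) * s = r * ((p a).2 * s) := by ring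
    rw [this]
    rfl
  · intro a ha haJ
    refine (key ⟨a, ha⟩ a 0 haJ (by ring)).trans ?_
    rw [zero_mul, map_zero]
  · refine (key _ 0 1 J.zero_mem (by ring)).trans ?_
    rw [one_mul]

end Glue

section Mult
variable {R : Type} [CommRing R]

lemma quot_smul_eq (I : Ideal R) (r : R) (q : R ⧸ I) :
    (Ideal.Quotient.mk I r) • q = r • q := by
  obtain ⟨v, rfl⟩ := Ideal.Quotient.mk_surjective q
  rfl

lemma mult_of_linear {t : R}
    (hinj : Module.Injective (R ⧸ Ideal.span {t}) (R ⧸ Ideal.span {t}))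
    (J : Ideal R) (σ : J →ₗ[R] R ⧸ Ideal.span {t})
    (hkill : ∀ (a : R) (ha : a ∈ J), a ∈ Ideal.span {t} → σ ⟨a, ha⟩ = 0) :
    ∃ d, ∀ (a : R) (ha : a ∈ J), σ ⟨a, ha⟩ = Ideal.Quotient.mk _ (d * a) := by
  classical
  set A := R ⧸ Ideal.span {t} with hA
  set mkt : R →+* A := Ideal.Quotient.mk (Ideal.span {t}) with hmkt
  set M : Ideal A := J.map (mkt : R →+* A) with hM
  have hdec : ∀ m : M, ∃ a, a ∈ J ∧ mkt a = (m : A) := by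
    rintro ⟨m, hm⟩
    obtain ⟨a, ha, he⟩ :=
      (Ideal.mem_map_iff_of_surjective mkt Ideal.Quotient.mk_surjective).mp hm
    exact ⟨a, ha, he⟩
  choose rep hrep1 hrep2 using hdec
  have wd : ∀ (a a' : R) (ha : a ∈ J) (ha' : a' ∈ J), mkt a = mkt a' →
      σ ⟨a, ha⟩ = σ ⟨a', ha'⟩ := by
    intro a a' ha ha' he
    have hsub : a - a' ∈ Ideal.span {t} := by
      rwa [← Ideal.Quotient.mk_eq_mk_iff_sub_mem]
    have h0 : σ ⟨a - a', sub_mem ha ha'⟩ = 0 := hkill _ _ hsub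
    have : (⟨a, ha⟩ : J) = ⟨a', ha'⟩ + ⟨a - a', sub_mem ha ha'⟩ := by
      ext; simp
    rw [this, map_add, h0, add_zero]
  have τadd : ∀ m m' : M, σ ⟨rep (m + m'), hrep1 _⟩ = σ ⟨rep m, hrep1 _⟩ + σ ⟨rep m', hrep1 _⟩ := by
    intro m m'
    have : σ ⟨rep (m + m'), hrep1 _⟩ = σ ⟨rep m + rep m', add_mem (hrep1 _) (hrep1 _)⟩ := by
      refine wd _ _ _ _ ?_
      rw [map_add, hrep2, hrep2, hrep2]
      rfl
    rw [this]
    have : (⟨rep m + rep m', add_mem (hrep1 _) (hrep1 _)⟩ : J)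
        = ⟨rep m, hrep1 _⟩ + ⟨rep m', hrep1 _⟩ := rfl
    rw [this, map_add]
  have τsmul : ∀ (c : A) (m : M), σ ⟨rep (c • m), hrep1 _⟩ = c • σ ⟨rep m, hrep1 _⟩ := by
    intro c m
    obtain ⟨r, rfl⟩ := Ideal.Quotient.mk_surjective c
    have h1 : σ ⟨rep ((Ideal.Quotient.mk _ r : A) • m), hrep1 _⟩
        = σ ⟨r * rep m, Ideal.mul_mem_left _ _ (hrep1 _)⟩ := by
      refine wd _ _ _ _ ?_
      rw [hrep2, map_mul, hrep2]
      rfl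
    rw [h1, quot_smul_eq]
    have : (⟨r * rep m, Ideal.mul_mem_left _ _ (hrep1 _)⟩ : J) = r • ⟨rep m, hrep1 _⟩ := rfl
    rw [this, map_smul]
  set τ : M →ₗ[A] A :=
    ⟨⟨fun m => σ ⟨rep m, hrep1 m⟩, fun m m' => τadd m m'⟩, fun c m => τsmul c m⟩ with hτ
  obtain ⟨h, hh⟩ := hinj.out M.subtype Subtype.val_injective τ
  obtain ⟨d, hd⟩ := Ideal.Quotient.mk_surjective (h 1)
  refine ⟨d, fun a ha => ?_⟩
  have hmem : mkt a ∈ M := Ideal.mem_map_of_mem mkt ha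
  have e1 : σ ⟨a, ha⟩ = τ ⟨mkt a, hmem⟩ := wd _ _ _ _ (hrep2 ⟨mkt a, hmem⟩).symm
  have e2 : τ ⟨mkt a, hmem⟩ = h (mkt a) := (hh ⟨mkt a, hmem⟩).symm
  rw [e1, e2]
  calc h (mkt a) = h ((mkt a) • 1) := by rw [smul_eq_mul, mul_one]
  _ = (mkt a) • h 1 := map_smul h _ _
  _ = Ideal.Quotient.mk _ (d * a) := by
      rw [← hd, smul_eq_mul, ← map_mul, mul_comm]

end Mult

section EmultSec
variable {R : Type} [CommRing R]

lemma smul_qmk (I : Ideal R) (r v : R) :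
    r • (Ideal.Quotient.mk I v) = Ideal.Quotient.mk I (r * v) := rfl

/-- Every linear map from an ideal containing `y` into `R/(y)` vanishing on `(y)`
is given by multiplication. -/
def Emult (y : R) : Prop :=
  ∀ (J : Ideal R) (φ : J →ₗ[R] R ⧸ Ideal.span {y}),
    (∀ (a : R) (ha : a ∈ J), a ∈ Ideal.span {y} → φ ⟨a, ha⟩ = 0) →
    ∃ c, ∀ (a : R) (ha : a ∈ J), φ ⟨a, ha⟩ = Ideal.Quotient.mk _ (c * a)

lemma emult_base {t : R}
    (hinj : Module.Injective (R ⧸ Ideal.span {t}) (R ⧸ Ideal.span {t})) :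
    Emult t := fun J φ hkill => mult_of_linear hinj J φ hkill

/-- the multiplication map `R/(y) → R/(z)` by `u`, when `u * (y) ⊆ (z)`. -/
noncomputable def mulQuot (u y z : R) (h : Ideal.span {y} ≤ Submodule.comap (LinearMap.lsmul R R u) (Ideal.span {z})) :
    R ⧸ Ideal.span {y} →ₗ[R] R ⧸ Ideal.span {z} :=
  Submodule.mapQ _ _ (LinearMap.lsmul R R u) h

lemma mulQuot_apply (u y z : R) (h) (v : R) :
    mulQuot u y z h (Ideal.Quotient.mk _ v) = Ideal.Quotient.mk _ (u * v) := by
  show Submodule.mapQ _ _ _ h (Submodule.Quotient.mk v) = _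
  rw [Submodule.mapQ_apply]
  rfl

lemma emult_step {t y : R} (ht : t ∈ nonZeroDivisors R) (hy : y ∈ nonZeroDivisors R)
    (hinj : Module.Injective (R ⧸ Ideal.span {t}) (R ⧸ Ideal.span {t}))
    (hE : Emult y) : Emult (t * y) := by
  intro J φ hkill
  classical
  set J1 : Ideal R := J.colon (Ideal.span {t}) with hJ1
  have hJ1mem : ∀ r : R, r ∈ J1 ↔ r * t ∈ J := fun r => Ideal.mem_colon_span_singleton
  set multT : J1 →ₗ[R] J :=
    ⟨⟨fun r => ⟨t * (r : R), by rw [mul_comm]; exact (hJ1mem _).mp r.2⟩,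
      fun a b => by ext; show t * (↑a + ↑b) = t * ↑a + t * ↑b; ring⟩,
      fun c a => by ext; show t * (c * ↑a) = c * (t * ↑a); ring⟩ with hmultT
  set φt : J1 →ₗ[R] R ⧸ Ideal.span {t * y} := φ.comp multT with hφt
  have hcomap1 : Ideal.span {y} ≤ Submodule.comap (LinearMap.lsmul R R t) (Ideal.span {t * y}) := by
    intro v hv
    obtain ⟨u, rfl⟩ := Ideal.mem_span_singleton.mp hv
    show t * (y * u) ∈ Ideal.span {t * y}
    exact Ideal.mem_span_singleton.mpr ⟨u, by ring⟩
  set μ := mulQuot t y (t * y) hcomap1 with hμ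
  have μinj : Function.Injective μ := by
    intro q q' he
    obtain ⟨v, rfl⟩ := Ideal.Quotient.mk_surjective q
    obtain ⟨v', rfl⟩ := Ideal.Quotient.mk_surjective q'
    rw [hμ, mulQuot_apply, mulQuot_apply, Ideal.Quotient.mk_eq_mk_iff_sub_mem] at he
    rw [Ideal.Quotient.mk_eq_mk_iff_sub_mem]
    rw [← mul_sub] at he
    obtain ⟨u, hu⟩ := Ideal.mem_span_singleton.mp he
    refine Ideal.mem_span_singleton.mpr ⟨u, ?_⟩
    refine reg_cancel' ht ?_
    rw [hu]; ring
  have hrange : ∀ r : J1, φt r ∈ LinearMap.range μ := by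
    intro r
    obtain ⟨v, hv⟩ := Ideal.Quotient.mk_surjective (φt r)
    have h0 : y • φt r = 0 := by
      have e1 : y • multT r = ⟨(t * y) * (r : R), by
        rw [mul_comm t y, mul_assoc]
        exact Submodule.smul_mem _ _ (multT r).2⟩ := by
        ext; show y * (t * ↑r) = t * y * ↑r; ring
      rw [hφt, LinearMap.comp_apply, ← map_smul, e1]
      exact hkill _ _ (Ideal.mem_span_singleton.mpr ⟨(r : R), rfl⟩)
    rw [← hv, smul_qmk] at h0
    have : y * v ∈ Ideal.span {t * y} := by
      rwa [← Ideal.Quotient.eq_zero_iff_mem]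
    obtain ⟨u, hu⟩ := Ideal.mem_span_singleton.mp this
    have hvtu : v = t * u := by
      refine reg_cancel' hy ?_
      rw [hu]; ring
    refine ⟨Ideal.Quotient.mk _ u, ?_⟩
    rw [hμ, mulQuot_apply, ← hvtu, hv]
  set e := LinearEquiv.ofInjective μ μinj with he
  set g : J1 →ₗ[R] R ⧸ Ideal.span {y} :=
    (e.symm : LinearMap.range μ →ₗ[R] R ⧸ Ideal.span {y}).comp
      (φt.codRestrict (LinearMap.range μ) hrange) with hg
  have hμg : ∀ r : J1, μ (g r) = φt r := by
    intro r
    show μ (e.symm ⟨φt r, hrange r⟩) = φt r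
    rw [he, LinearEquiv.ofInjective_symm_apply]
  have gkill : ∀ (r : R) (hr : r ∈ J1), r ∈ Ideal.span {y} → g ⟨r, hr⟩ = 0 := by
    intro r hr hry
    obtain ⟨u, rfl⟩ := Ideal.mem_span_singleton.mp hry
    have : φt ⟨y * u, hr⟩ = 0 := by
      have : multT ⟨y * u, hr⟩ = ⟨t * (y * u), (multT ⟨y * u, hr⟩).2⟩ := rfl
      rw [hφt, LinearMap.comp_apply, this]
      exact hkill _ _ (Ideal.mem_span_singleton.mpr ⟨u, by ring⟩)
    have h2 := hμg ⟨y * u, hr⟩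
    rw [this] at h2
    exact μinj (by rw [h2, map_zero])
  obtain ⟨c, hc⟩ := hE J1 g gkill
  have hφtr : ∀ (r : R) (hr : r ∈ J1), φ ⟨t * r, (multT ⟨r, hr⟩).2⟩
      = Ideal.Quotient.mk _ (t * (c * r)) := by
    intro r hr
    have h1 := hμg ⟨r, hr⟩
    rw [hc r hr, hμ, mulQuot_apply] at h1
    exact h1.symm
  set ψ : J →ₗ[R] R ⧸ Ideal.span {t * y} :=
    φ - ((Ideal.span {t * y}).mkQ.comp ((LinearMap.lsmul R R c).comp J.subtype)) with hψ
  have ψapply : ∀ (a : R) (ha : a ∈ J), ψ ⟨a, ha⟩ = φ ⟨a, ha⟩ - Ideal.Quotient.mk _ (c * a) := by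
    intro a ha; rfl
  have ψkill : ∀ (a : R) (ha : a ∈ J), a ∈ Ideal.span {t} → ψ ⟨a, ha⟩ = 0 := by
    intro a ha hat
    obtain ⟨r, rfl⟩ := Ideal.mem_span_singleton.mp hat
    have hr1 : r ∈ J1 := (hJ1mem r).mpr (by rwa [mul_comm t r] at ha)
    rw [ψapply, hφtr r hr1]
    rw [sub_eq_zero, Ideal.Quotient.mk_eq_mk_iff_sub_mem]
    have : t * (c * r) - c * (t * r) = 0 := by ring
    rw [this]
    exact Ideal.zero_mem _
  have hcomap2 : Ideal.span {t} ≤ Submodule.comap (LinearMap.lsmul R R y) (Ideal.span {t * y}) := by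
    intro v hv
    obtain ⟨u, rfl⟩ := Ideal.mem_span_singleton.mp hv
    show y * (t * u) ∈ Ideal.span {t * y}
    exact Ideal.mem_span_singleton.mpr ⟨u, by ring⟩
  set μ2 := mulQuot y t (t * y) hcomap2 with hμ2
  have μ2inj : Function.Injective μ2 := by
    intro q q' heq
    obtain ⟨v, rfl⟩ := Ideal.Quotient.mk_surjective q
    obtain ⟨v', rfl⟩ := Ideal.Quotient.mk_surjective q'
    rw [hμ2, mulQuot_apply, mulQuot_apply, Ideal.Quotient.mk_eq_mk_iff_sub_mem] at heq
    rw [Ideal.Quotient.mk_eq_mk_iff_sub_mem]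
    rw [← mul_sub] at heq
    obtain ⟨u, hu⟩ := Ideal.mem_span_singleton.mp heq
    refine Ideal.mem_span_singleton.mpr ⟨u, ?_⟩
    refine reg_cancel' hy ?_
    rw [hu]; ring
  have hrange2 : ∀ a : J, ψ a ∈ LinearMap.range μ2 := by
    intro a
    obtain ⟨v, hv⟩ := Ideal.Quotient.mk_surjective (ψ a)
    have h0 : t • ψ a = 0 := by
      have e1 : t • a = (⟨t * (a : R), Submodule.smul_mem _ _ a.2⟩ : J) := rfl
      rw [← map_smul, e1]
      exact ψkill _ _ (Ideal.mem_span_singleton.mpr ⟨(a : R), rfl⟩)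
    rw [← hv, smul_qmk] at h0
    have : t * v ∈ Ideal.span {t * y} := by rwa [← Ideal.Quotient.eq_zero_iff_mem]
    obtain ⟨u, hu⟩ := Ideal.mem_span_singleton.mp this
    have hvyu : v = y * u := by
      refine reg_cancel' ht ?_
      rw [hu]; ring
    refine ⟨Ideal.Quotient.mk _ u, ?_⟩
    rw [hμ2, mulQuot_apply, ← hvyu, hv]
  set e2 := LinearEquiv.ofInjective μ2 μ2inj with he2
  set σ : J →ₗ[R] R ⧸ Ideal.span {t} :=
    (e2.symm : LinearMap.range μ2 →ₗ[R] R ⧸ Ideal.span {t}).comp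
      (ψ.codRestrict (LinearMap.range μ2) hrange2) with hσ
  have hμ2σ : ∀ a : J, μ2 (σ a) = ψ a := by
    intro a
    show μ2 (e2.symm ⟨ψ a, hrange2 a⟩) = ψ a
    rw [he2, LinearEquiv.ofInjective_symm_apply]
  have σkill : ∀ (a : R) (ha : a ∈ J), a ∈ Ideal.span {t} → σ ⟨a, ha⟩ = 0 := by
    intro a ha hat
    have h2 := hμ2σ ⟨a, ha⟩
    rw [ψkill a ha hat] at h2
    exact μ2inj (by rw [h2, map_zero])
  obtain ⟨d, hd⟩ := mult_of_linear hinj J σ σkill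
  refine ⟨c + y * d, fun a ha => ?_⟩
  have h3 : ψ ⟨a, ha⟩ = Ideal.Quotient.mk _ (y * (d * a)) := by
    rw [← hμ2σ ⟨a, ha⟩, hd a ha, hμ2, mulQuot_apply]
  have h4 := ψapply a ha
  rw [h3] at h4
  rw [eq_sub_iff_add_eq] at h4
  rw [← h4, ← map_add]
  congr 1
  ring

end EmultSec
section Cogen
variable {R : Type} [CommRing R]

lemma cogen [IsLocalRing R] {y : R} (hyu : y ∈ nonunits R)
    (hm : ∃ k, (maximalIdeal R) ^ k ≤ Ideal.span {y}) (hE : Emult y)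
    {J : Ideal R} (hyJ : y ∈ J) {b : R} (hb : b ∉ J) :
    ∃ z, (∀ a ∈ J, z * a ∈ Ideal.span {y}) ∧ z * b ∉ Ideal.span {y} := by
  classical
  obtain ⟨s, hs1, hs2⟩ := exists_socle hyu hm
  obtain ⟨k, hk⟩ := hm
  set Jb : Ideal R := J.colon (Ideal.span {b}) with hJb
  have hJbmem : ∀ r : R, r ∈ Jb ↔ r * b ∈ J := fun r => Ideal.mem_colon_span_singleton
  have hyJle : Ideal.span {y} ≤ J := (Ideal.span_singleton_le_iff_mem _).mpr hyJ
  have hJbk : ∃ j, (maximalIdeal R) ^ j ≤ Jb :=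
    ⟨k, fun r hr => (hJbmem r).mpr (Ideal.mul_mem_right b J (hyJle (hk hr)))⟩
  set j0 := Nat.find hJbk with hj0
  have hj0le : (maximalIdeal R) ^ j0 ≤ Jb := Nat.find_spec hJbk
  have hj0pos : j0 ≠ 0 := by
    intro h0
    have h1 : (1 : R) ∈ Jb := by
      have := hj0le
      rw [h0, pow_zero, Ideal.one_eq_top] at this
      exact this Submodule.mem_top
    exact hb (by simpa using (hJbmem 1).mp h1)
  have hlt : ¬ ((maximalIdeal R) ^ (j0 - 1) ≤ Jb) := Nat.find_min hJbk (by omega)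
  obtain ⟨w, hw1, hw2⟩ := SetLike.not_le_iff_exists.mp hlt
  set b' := w * b with hb'
  have hb'J : b' ∉ J := fun h => hw2 ((hJbmem w).mpr h)
  have hcond : ∀ r : R, r * b' ∈ J → r * s ∈ Ideal.span {y} := by
    intro r hr
    have hproper : J.colon (Ideal.span {b'}) ≠ ⊤ := by
      intro htop
      apply hb'J
      have h1 : (1 : R) ∈ J.colon (Ideal.span {b'}) := htop ▸ Submodule.mem_top
      have h2 := Ideal.mem_colon_span_singleton.mp h1
      rwa [one_mul] at h2
    have hrm : r ∈ maximalIdeal R := by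
      refine IsLocalRing.le_maximalIdeal hproper ?_
      exact Ideal.mem_colon_span_singleton.mpr hr
    rw [mul_comm]
    exact hs2 r hrm
  obtain ⟨φ, hφJ, hφb⟩ := exists_glue J b' y s hcond
  have hkill : ∀ (a : R) (ha : a ∈ (J ⊔ Ideal.span {b'} : Ideal R)),
      a ∈ Ideal.span {y} → φ ⟨a, ha⟩ = 0 := fun a ha hay => hφJ a ha (hyJle hay)
  obtain ⟨c, hc⟩ := hE _ φ hkill
  refine ⟨c * w, ?_, ?_⟩
  · intro a haJ
    have h1 : φ ⟨a, Ideal.mem_sup_left haJ⟩ = 0 := hφJ a _ haJ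
    have h2 := hc a (Ideal.mem_sup_left haJ)
    rw [h1] at h2
    have h4 : c * a ∈ Ideal.span {y} := by
      rw [← Ideal.Quotient.eq_zero_iff_mem, ← h2]
    have h3 : c * w * a = w * (c * a) := by ring
    rw [h3]
    exact Ideal.mul_mem_left _ _ h4
  · intro hmem
    apply hs1
    have h2 := hc b' (Ideal.mem_sup_right (Ideal.mem_span_singleton_self b'))
    rw [hφb] at h2
    have hcb : c * b' ∈ Ideal.span {y} := by
      have he : c * w * b = c * b' := by rw [hb']; ring
      rwa [he] at hmem
    have hsub : s - c * b' ∈ Ideal.span {y} := (Ideal.Quotient.mk_eq_mk_iff_sub_mem _ _).mp h2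
    have he2 : s = (s - c * b') + c * b' := by ring
    rw [he2]
    exact add_mem hsub hcb

lemma cogen_descend {x u : R} (hu : u ∈ nonZeroDivisors R)
    (hC : ∀ (J : Ideal R), x * u ∈ J → ∀ b ∉ J,
      ∃ z, (∀ a ∈ J, z * a ∈ Ideal.span {x * u}) ∧ z * b ∉ Ideal.span {x * u}) :
    ∀ (J : Ideal R), x ∈ J → ∀ b ∉ J,
      ∃ z, (∀ a ∈ J, z * a ∈ Ideal.span {x}) ∧ z * b ∉ Ideal.span {x} := by
  intro J hxJ b hb
  set J2 : Ideal R := Submodule.map (LinearMap.lsmul R R u) J ⊔ Ideal.span {x * u} with hJ2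
  have hxu2 : x * u ∈ J2 := Ideal.mem_sup_right (Ideal.mem_span_singleton_self _)
  have hub : u * b ∉ J2 := by
    intro h
    rw [hJ2, Submodule.mem_sup] at h
    obtain ⟨q, hq, r, hr, he⟩ := h
    obtain ⟨h0, hh0, rfl⟩ := hq
    obtain ⟨rc, hrc⟩ := Ideal.mem_span_singleton.mp hr
    apply hb
    have h1 : u * b = u * (h0 + x * rc) := by
      rw [← he, hrc]
      show (LinearMap.lsmul R R u) h0 + x * u * rc = u * (h0 + x * rc)
      simp [LinearMap.lsmul_apply, smul_eq_mul]
      ring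
    have hbe : b = h0 + x * rc := reg_cancel' hu h1
    rw [hbe]
    exact add_mem hh0 (Ideal.mul_mem_right rc J hxJ)
  obtain ⟨z, hz1, hz2⟩ := hC J2 hxu2 (u * b) hub
  refine ⟨z, ?_, ?_⟩
  · intro a ha
    have hmem : u * a ∈ J2 := by
      refine Ideal.mem_sup_left ?_
      have := Submodule.mem_map_of_mem (f := LinearMap.lsmul R R u) ha
      simpa [LinearMap.lsmul_apply, smul_eq_mul] using this
    have h1 := hz1 (u * a) hmem
    obtain ⟨e, he⟩ := Ideal.mem_span_singleton.mp h1
    refine Ideal.mem_span_singleton.mpr ⟨e, reg_cancel' hu ?_⟩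
    linear_combination he
  · intro h
    obtain ⟨e, he⟩ := Ideal.mem_span_singleton.mp h
    apply hz2
    refine Ideal.mem_span_singleton.mpr ⟨e, ?_⟩
    linear_combination u * he

end Cogen
section Pow
variable {R : Type} [CommRing R]

lemma emult_pow {t : R} (ht : t ∈ nonZeroDivisors R)
    (hinj : Module.Injective (R ⧸ Ideal.span {t}) (R ⧸ Ideal.span {t})) :
    ∀ n : ℕ, Emult (t ^ (n + 1)) := by
  intro n
  induction n with
  | zero => rw [pow_one]; exact emult_base hinj
  | succ m ih =>
      have h : t ^ (m + 1 + 1) = t * t ^ (m + 1) := by rw [pow_succ']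
      rw [h]
      exact emult_step ht (pow_mem ht (m + 1)) hinj ih

end Pow

theorem stmt_10 (R : Type) [CommRing R] (hGor : IsGorensteinLocalOfDimOne R)
    (I : Ideal R) (hreg : ∃ x ∈ I, x ∈ nonZeroDivisors R)
    (hend : multEnd (idealImage R I) = Set.range (algebraMap R (FractionRing R))) :
    I.IsPrincipal := by
  obtain ⟨hNoeth, hLocal, hdim, t, htu, htreg, htinj⟩ := hGor
  haveI := hNoeth
  haveI := hLocal
  obtain ⟨x, hxI, hxreg⟩ := hreg
  by_cases hxun : IsUnit x
  · have hI : I = ⊤ := Ideal.eq_top_of_isUnit_mem I hxI hxun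
    exact ⟨⟨1, by rw [hI, ← Ideal.span_singleton_one]⟩⟩
  have hxu : x ∈ nonunits R := hxun
  set K : Ideal R := (Ideal.span {x}).colon I with hK
  have hKmem : ∀ r : R, r ∈ K ↔ ∀ i ∈ I, r * i ∈ Ideal.span {x} := by
    intro r
    rw [hK, Submodule.mem_colon]
    simp [smul_eq_mul]
  have hxK : x ∈ K := (hKmem x).mpr (fun i _ => Ideal.mul_mem_right i _
    (Ideal.mem_span_singleton_self x))
  have hIK_le : I * K ≤ Ideal.span {x} := by
    rw [Ideal.mul_le]
    intro i hi r hr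
    rw [mul_comm]
    exact (hKmem r).mp hr i hi
  set J : Ideal R := (I * K).colon (Ideal.span {x}) with hJdef
  have hJmem : ∀ r : R, r ∈ J ↔ r * x ∈ I * K := fun r => Ideal.mem_colon_span_singleton
  have hIJ : I ≤ J := fun i hi => (hJmem i).mpr (Ideal.mul_mem_mul hi hxK)
  by_cases hJm : J ≤ maximalIdeal R
  · -- contradiction branch
    exfalso
    have hIm : I ≤ maximalIdeal R := le_trans hIJ hJm
    have htm : t ∈ maximalIdeal R := htu
    obtain ⟨k, hk⟩ := pow_maximal_le hdim hxreg hxu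
    obtain ⟨k2, hk2⟩ := pow_maximal_le hdim htreg htu
    have hk1 : k ≠ 0 := by
      intro h0
      rw [h0, pow_zero, Ideal.one_eq_top] at hk
      exact hxun (isUnit_of_dvd_one (Ideal.mem_span_singleton.mp (hk Submodule.mem_top)))
    have hEt : Emult (t ^ k) := by
      obtain ⟨k', rfl⟩ : ∃ k', k = k' + 1 := ⟨k - 1, by omega⟩
      exact emult_pow htreg htinj k'
    have htk : t ^ k ∈ Ideal.span {x} := hk (Ideal.pow_mem_pow htm k)
    obtain ⟨w, hw⟩ := Ideal.mem_span_singleton.mp htk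
    have htkreg : t ^ k ∈ nonZeroDivisors R := pow_mem htreg k
    have hwreg : w ∈ nonZeroDivisors R := by
      rw [mem_nonZeroDivisors_iff_right]; intro z hz
      refine mem_nonZeroDivisors_iff_right.mp htkreg z ?_
      rw [hw, show z * (x * w) = (z * w) * x by ring, hz, zero_mul]
    have hmtk : ∃ kk, (maximalIdeal R) ^ kk ≤ Ideal.span {t ^ k} := by
      refine ⟨k2 * k, ?_⟩
      rw [pow_mul, ← Ideal.span_singleton_pow]
      exact Ideal.pow_right_mono hk2 k
    have htku : t ^ k ∈ nonunits R := by
      have : t ^ k ∈ maximalIdeal R := by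
        obtain ⟨k', rfl⟩ : ∃ k', k = k' + 1 := ⟨k - 1, by omega⟩
        rw [pow_succ]
        exact Ideal.mul_mem_left _ _ htm
      exact this
    have hCtk : ∀ (Jq : Ideal R), t ^ k ∈ Jq → ∀ b ∉ Jq,
        ∃ z, (∀ a ∈ Jq, z * a ∈ Ideal.span {t ^ k}) ∧ z * b ∉ Ideal.span {t ^ k} :=
      fun Jq hJq b hb => cogen htku hmtk hEt hJq hb
    have hCxw : ∀ (Jq : Ideal R), x * w ∈ Jq → ∀ b ∉ Jq,
        ∃ z, (∀ a ∈ Jq, z * a ∈ Ideal.span {x * w}) ∧ z * b ∉ Ideal.span {x * w} := by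
      rw [← hw]
      exact hCtk
    have hCx := cogen_descend hwreg hCxw
    obtain ⟨s, hs1, hs2⟩ := exists_socle htu ⟨k2, hk2⟩
    have hkey : ∀ i ∈ I, ∃ i' ∈ I, s * i = t * i' := by
      intro i hi
      have hsi : s * i ∈ Ideal.span {t} := hs2 i (hIm hi)
      obtain ⟨b, hb⟩ := Ideal.mem_span_singleton.mp hsi
      refine ⟨b, ?_, hb⟩
      by_contra hbI
      obtain ⟨z, hz1, hz2⟩ := hCx I hxI b hbI
      have hzK : z ∈ K := (hKmem z).mpr hz1
      have hizIK : i * z ∈ I * K := Ideal.mul_mem_mul hi hzK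
      have hizx : i * z ∈ Ideal.span {x} := hIK_le hizIK
      obtain ⟨j, hj⟩ := Ideal.mem_span_singleton.mp hizx
      have hjJ : j ∈ J := by
        refine (hJmem j).mpr ?_
        rw [show j * x = i * z by rw [mul_comm]; exact hj.symm]
        exact hizIK
      have hjm : j ∈ maximalIdeal R := hJm hjJ
      obtain ⟨u2, hu2⟩ := Ideal.mem_span_singleton.mp (hs2 j hjm)
      apply hz2
      refine Ideal.mem_span_singleton.mpr ⟨u2, reg_cancel' htreg ?_⟩
      linear_combination (-z) * hb + s * hj + x * hu2
    -- pass to the fraction ring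
    have hinj : Function.Injective (algebraMap R (FractionRing R)) :=
      IsFractionRing.injective R (FractionRing R)
    have hut : IsUnit (algebraMap R (FractionRing R) t) :=
      IsLocalization.map_units (FractionRing R) (⟨t, htreg⟩ : nonZeroDivisors R)
    obtain ⟨ut, hut'⟩ := hut
    set α : FractionRing R := (↑ut⁻¹ : FractionRing R) * algebraMap R (FractionRing R) s
      with hα
    have hαmem : α ∈ multEnd (idealImage R I) := by
      intro a ha
      obtain ⟨i, hiI, rfl⟩ := ha
      obtain ⟨i', hi'I, hii'⟩ := hkey i hiI
      refine ⟨i', hi'I, ?_⟩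
      have h1 : (↑ut : FractionRing R) * (α * algebraMap R (FractionRing R) i)
          = (↑ut : FractionRing R) * algebraMap R (FractionRing R) i' := by
        rw [hα, show (↑ut : FractionRing R) * ((↑ut⁻¹ : FractionRing R) *
            algebraMap R (FractionRing R) s * algebraMap R (FractionRing R) i)
          = ((↑ut : FractionRing R) * (↑ut⁻¹ : FractionRing R)) *
            (algebraMap R (FractionRing R) s * algebraMap R (FractionRing R) i) by ring,
          Units.mul_inv, one_mul, ← map_mul, hii', map_mul, hut']
      exact ((Units.mul_right_inj ut).mp h1).symm
    rw [hend] at hαmem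
    obtain ⟨c, hc⟩ := hαmem
    apply hs1
    refine Ideal.mem_span_singleton.mpr ⟨c, ?_⟩
    apply hinj
    rw [map_mul, ← hut', hc, hα]
    rw [show (↑ut : FractionRing R) * ((↑ut⁻¹ : FractionRing R) *
      algebraMap R (FractionRing R) s) = ((↑ut : FractionRing R) * (↑ut⁻¹ : FractionRing R)) *
      algebraMap R (FractionRing R) s by ring, Units.mul_inv, one_mul]
  · -- principal branch
    have hIKm : ¬ (I * K ≤ Ideal.span {x} * maximalIdeal R) := by
      intro hle
      apply hJm
      intro j hj
      have hjx : j * x ∈ Ideal.span {x} * maximalIdeal R := hle ((hJmem j).mp hj)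
      obtain ⟨v, hvm, hv⟩ := Ideal.mem_span_singleton_mul.mp hjx
      have : j = v := reg_cancel' hxreg (by linear_combination -hv)
      rwa [this]
    rw [Ideal.mul_le] at hIKm
    push_neg at hIKm
    obtain ⟨i, hiI, r, hrK, hir⟩ := hIKm
    have hirx : i * r ∈ Ideal.span {x} := by
      rw [mul_comm]
      exact (hKmem r).mp hrK i hiI
    obtain ⟨cc, hcc⟩ := Ideal.mem_span_singleton.mp hirx
    have hcu : IsUnit cc := by
      by_contra hcu
      apply hir
      rw [hcc]
      exact Ideal.mul_mem_mul (Ideal.mem_span_singleton_self x) hcu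
    obtain ⟨cu, hcu'⟩ := hcu
    refine ⟨⟨i, ?_⟩⟩
    apply le_antisymm
    · intro yy hyy
      have h1 : r * yy ∈ Ideal.span {x} := (hKmem r).mp hrK yy hyy
      obtain ⟨e, he⟩ := Ideal.mem_span_singleton.mp h1
      have h2 : yy * cc = i * e := reg_cancel' hxreg (by linear_combination -yy * hcc + i * he)
      have hccinv : cc * (↑cu⁻¹ : R) = 1 := by rw [← hcu']; exact Units.mul_inv cu
      refine Ideal.mem_span_singleton'.mpr ⟨e * (↑cu⁻¹ : R), ?_⟩
      linear_combination (-(↑cu⁻¹ : R)) * h2 + yy * hccinv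
    · rw [show Submodule.span R {i} = Ideal.span {i} from rfl]
      exact (Ideal.span_singleton_le_iff_mem I).mpr hiI
end
end
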